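/- Let H, A be skew co-paired Hopf algebras with left co-integral ∫_H on H. Then (∫_H ⊗ id)σ = (∫_H ⊗ id ⊗ id)(σ₂₃^{±1}·σ₁₃), i.e. both with σ₂₃ and with σ₂₃⁻¹ inserted, the triple-tensor expression reduces to the pairing integral. -/

import Mathlib

open TensorProduct

set_option maxHeartbeats 1000000
set_option synthInstance.maxHeartbeats 400000
set_option maxRecDepth 8000

namespace Stmt7

variable {K H A : Type*} [Field K] [Ring H] [Ring A] [HopfAlgebra K H] [HopfAlgebra K A]

noncomputable def s13HHA (σ : H ⊗[K] A) : H ⊗[K] (H ⊗[K] A) :=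
  TensorProduct.map LinearMap.id (TensorProduct.mk K H A 1) σ

noncomputable def s23HHA (σ : H ⊗[K] A) : H ⊗[K] (H ⊗[K] A) := (1 : H) ⊗ₜ[K] σ

noncomputable def s13HAA (σ : H ⊗[K] A) : H ⊗[K] (A ⊗[K] A) :=
  TensorProduct.map LinearMap.id (TensorProduct.mk K A A 1) σ

noncomputable def s12HAA (σ : H ⊗[K] A) : H ⊗[K] (A ⊗[K] A) :=
  TensorProduct.map LinearMap.id ((TensorProduct.mk K A A).flip 1) σ

noncomputable def idComul : H ⊗[K] A →ₗ[K] H ⊗[K] (A ⊗[K] A) :=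
  LinearMap.lTensor H (Coalgebra.comul : A →ₗ[K] A ⊗[K] A)

noncomputable def comulId : H ⊗[K] A →ₗ[K] H ⊗[K] (H ⊗[K] A) :=
  (TensorProduct.assoc K H H A).toLinearMap ∘ₗ
    LinearMap.rTensor A (Coalgebra.comul : H →ₗ[K] H ⊗[K] H)

/-- Left invariance of a co-integral `∫ : H → K`: `(id ⊗ ∫)∘Δ = 1_H·∫`. -/
def IsLeftCoIntegral {R M : Type*} [Field R] [Ring M] [Bialgebra R M]
    (f : M →ₗ[R] R) : Prop :=
  ∀ m : M, (TensorProduct.rid R M)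
      (LinearMap.lTensor M f ((Coalgebra.comul : M →ₗ[R] M ⊗[R] M) m)) = f m • (1 : M)

/-- The normalization `μ := (∫_H ⊗ ∫_A)σ`. -/
noncomputable def mu (intH : H →ₗ[K] K) (intA : A →ₗ[K] K) (σ : H ⊗[K] A) : K :=
  (TensorProduct.lid K K) (TensorProduct.map intH intA σ)

/-- The delta element `δ̂_A := ν • (∫_H ⊗ id)σ`, where `ν` is a square root of `μ⁻¹`. -/
noncomputable def deltaA (intH : H →ₗ[K] K) (ν : K) (σ : H ⊗[K] A) : A :=
  ν • (TensorProduct.lid K A) (LinearMap.rTensor A intH σ)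


/-- `σ⁻¹ := (S_H ⊗ id)σ`. -/
noncomputable def sInv (σ : H ⊗[K] A) : H ⊗[K] A :=
  LinearMap.rTensor A (HopfAlgebra.antipode K : H →ₗ[K] H) σ

/-- `(∫_H ⊗ id ⊗ id) : H ⊗ H ⊗ A → H ⊗ A`, integrating the first leg. -/
noncomputable def intLeg1 (intH : H →ₗ[K] K) : H ⊗[K] (H ⊗[K] A) →ₗ[K] H ⊗[K] A :=
  (TensorProduct.lid K (H ⊗[K] A)).toLinearMap ∘ₗ LinearMap.rTensor (H ⊗[K] A) intH

/-! ### Auxiliary definitions for the proof of statement 7 -/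

/-- Contract the middle leg of `H ⊗ H ⊗ A` by `f : H →ₗ K`. -/
noncomputable def leg2 (f : H →ₗ[K] K) : H ⊗[K] (H ⊗[K] A) →ₗ[K] H ⊗[K] A :=
  LinearMap.lTensor H ((TensorProduct.lid K A).toLinearMap ∘ₗ LinearMap.rTensor A f)

/-- Multiply the first leg (after applying the antipode) into the second. -/
noncomputable def legS : H ⊗[K] (H ⊗[K] A) →ₗ[K] H ⊗[K] A :=
  LinearMap.rTensor A (LinearMap.mul' K H ∘ₗ
      LinearMap.rTensor H (HopfAlgebra.antipode K : H →ₗ[K] H)) ∘ₗ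
    (TensorProduct.assoc K H H A).symm.toLinearMap

/-- Contract the first leg of `H ⊗ A` by `f : H →ₗ K`. -/
noncomputable def ctr (f : H →ₗ[K] K) (x : H ⊗[K] A) : A :=
  (TensorProduct.lid K A) (LinearMap.rTensor A f x)

lemma ctr_tmul (f : H →ₗ[K] K) (h : H) (a : A) : ctr f (h ⊗ₜ[K] a) = f h • a := by
  simp [ctr]

lemma ctr_add (f : H →ₗ[K] K) (x y : H ⊗[K] A) : ctr f (x + y) = ctr f x + ctr f y := by
  simp [ctr]

lemma s13HHA_tmul (h : H) (a : A) : s13HHA (K := K) (h ⊗ₜ[K] a) = h ⊗ₜ[K] ((1 : H) ⊗ₜ[K] a) := by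
  simp [s13HHA]

lemma s13HHA_add (x y : H ⊗[K] A) : s13HHA (x + y) = s13HHA x + s13HHA y := by
  simp [s13HHA]

lemma leg2_contract (f : H →ₗ[K] K) (y : H ⊗[K] H) (a : A) :
    leg2 f ((TensorProduct.assoc K H H A) (y ⊗ₜ[K] a)) =
      (TensorProduct.rid K H) (LinearMap.lTensor H f y) ⊗ₜ[K] a := by
  induction y using TensorProduct.induction_on with
  | zero => simp
  | tmul h g =>
      simp only [TensorProduct.assoc_tmul, leg2, LinearMap.lTensor_tmul, LinearMap.coe_comp,
        Function.comp_apply, LinearMap.rTensor_tmul, LinearEquiv.coe_coe,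
        TensorProduct.lid_tmul, TensorProduct.rid_tmul, smul_tmul]
  | add u v hu hv => simp only [map_add, add_tmul, hu, hv]

lemma intLeg1_contract (f : H →ₗ[K] K) (y : H ⊗[K] H) (a : A) :
    intLeg1 f ((TensorProduct.assoc K H H A) (y ⊗ₜ[K] a)) =
      (TensorProduct.lid K H) (LinearMap.rTensor H f y) ⊗ₜ[K] a := by
  induction y using TensorProduct.induction_on with
  | zero => simp
  | tmul h g =>
      simp only [TensorProduct.assoc_tmul, intLeg1, LinearMap.coe_comp, Function.comp_apply,
        LinearMap.rTensor_tmul, LinearEquiv.coe_coe, TensorProduct.lid_tmul, smul_tmul']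
  | add u v hu hv => simp only [map_add, add_tmul, hu, hv]

lemma legS_contract (y : H ⊗[K] H) (a : A) :
    legS (K := K) ((TensorProduct.assoc K H H A) (y ⊗ₜ[K] a)) =
      (LinearMap.mul' K H)
        (LinearMap.rTensor H (HopfAlgebra.antipode K : H →ₗ[K] H) y) ⊗ₜ[K] a := by
  simp [legS]

/-! ### The three contractions of `comulId σ` -/

lemma leg2_comulId (intH : H →ₗ[K] K) (hintH : IsLeftCoIntegral intH) (x : H ⊗[K] A) :
    leg2 intH (comulId (K := K) x) = (1 : H) ⊗ₜ[K] ctr intH x := by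
  induction x using TensorProduct.induction_on with
  | zero => simp [ctr]
  | tmul h a =>
      rw [comulId, LinearMap.comp_apply, LinearEquiv.coe_coe, LinearMap.rTensor_tmul,
        leg2_contract, hintH h, ctr_tmul, smul_tmul]
  | add u v hu hv => rw [map_add, map_add, hu, hv, ctr_add, tmul_add]

lemma counit_comulId (x : H ⊗[K] A) :
    intLeg1 (Coalgebra.counit : H →ₗ[K] K) (comulId (K := K) x) = x := by
  induction x using TensorProduct.induction_on with
  | zero => simp
  | tmul h a =>
      rw [comulId, LinearMap.comp_apply, LinearEquiv.coe_coe, LinearMap.rTensor_tmul,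
        intLeg1_contract, Coalgebra.rTensor_counit_comul]
      simp
  | add u v hu hv => rw [map_add, map_add, hu, hv]

lemma legS_comulId (x : H ⊗[K] A) :
    legS (K := K) (comulId (K := K) x) =
      (1 : H) ⊗ₜ[K] ctr (Coalgebra.counit : H →ₗ[K] K) x := by
  induction x using TensorProduct.induction_on with
  | zero => simp [ctr]
  | tmul h a =>
      rw [comulId, LinearMap.comp_apply, LinearEquiv.coe_coe, LinearMap.rTensor_tmul,
        legS_contract, HopfAlgebra.mul_antipode_rTensor_comul_apply (R := K), ctr_tmul,
        Algebra.algebraMap_eq_smul_one, smul_tmul]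
  | add u v hu hv => rw [map_add, map_add, hu, hv, ctr_add, tmul_add]

/-! ### The contractions of the products -/

lemma leg2_mul (intH : H →ₗ[K] K) (x y : H ⊗[K] A) :
    leg2 intH (s13HHA x * s23HHA y) = x * ((1 : H) ⊗ₜ[K] ctr intH y) := by
  induction x using TensorProduct.induction_on with
  | zero => simp [s13HHA]
  | tmul h a =>
      induction y using TensorProduct.induction_on with
      | zero => simp [s23HHA, ctr]
      | tmul g b =>
          rw [s13HHA_tmul, s23HHA, Algebra.TensorProduct.tmul_mul_tmul,
            Algebra.TensorProduct.tmul_mul_tmul, ctr_tmul]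
          simp only [leg2, LinearMap.lTensor_tmul, LinearMap.coe_comp, Function.comp_apply,
            LinearMap.rTensor_tmul, LinearEquiv.coe_coe, TensorProduct.lid_tmul,
            Algebra.TensorProduct.tmul_mul_tmul, mul_one, one_mul, mul_smul_comm]
      | add u v hu hv =>
          rw [s23HHA, tmul_add, ← s23HHA, ← s23HHA, mul_add, map_add, hu, hv, ctr_add,
            tmul_add, mul_add]
  | add u v hu hv =>
      rw [s13HHA_add, add_mul, map_add, hu, hv, add_mul]

lemma intLeg1_mul (intH : H →ₗ[K] K) (x y : H ⊗[K] A) :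
    intLeg1 intH (s23HHA y * s13HHA x) = y * ((1 : H) ⊗ₜ[K] ctr intH x) := by
  induction x using TensorProduct.induction_on with
  | zero => simp [s13HHA, ctr]
  | tmul h a =>
      induction y using TensorProduct.induction_on with
      | zero => simp [s23HHA]
      | tmul g b =>
          rw [s13HHA_tmul, s23HHA, Algebra.TensorProduct.tmul_mul_tmul,
            Algebra.TensorProduct.tmul_mul_tmul, ctr_tmul]
          simp only [intLeg1, LinearMap.coe_comp, Function.comp_apply, LinearMap.rTensor_tmul,
            LinearEquiv.coe_coe, TensorProduct.lid_tmul, Algebra.TensorProduct.tmul_mul_tmul,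
            mul_one, one_mul, mul_smul_comm, TensorProduct.tmul_smul]
      | add u v hu hv =>
          rw [s23HHA, tmul_add, ← s23HHA, ← s23HHA, add_mul, map_add, hu, hv, add_mul]
  | add u v hu hv =>
      rw [s13HHA_add, mul_add, map_add, hu, hv, ctr_add, tmul_add, mul_add]

lemma sInv_add (x y : H ⊗[K] A) : sInv (x + y) = sInv x + sInv y := by
  simp [sInv]

lemma legS_mul (x y : H ⊗[K] A) :
    legS (K := K) (s13HHA x * s23HHA y) = sInv x * y := by
  induction x using TensorProduct.induction_on with
  | zero => simp [s13HHA, sInv]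
  | tmul h a =>
      induction y using TensorProduct.induction_on with
      | zero => simp [s23HHA]
      | tmul g b =>
          rw [s13HHA_tmul, s23HHA, Algebra.TensorProduct.tmul_mul_tmul, sInv,
            LinearMap.rTensor_tmul, Algebra.TensorProduct.tmul_mul_tmul]
          simp only [legS, LinearMap.coe_comp, Function.comp_apply, LinearEquiv.coe_coe,
            TensorProduct.assoc_symm_tmul, LinearMap.rTensor_tmul, LinearMap.mul'_apply,
            mul_one, one_mul, Algebra.TensorProduct.tmul_mul_tmul]
      | add u v hu hv =>
          rw [s23HHA, tmul_add, ← s23HHA, ← s23HHA, mul_add, map_add, hu, hv, mul_add]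
  | add u v hu hv =>
      rw [s13HHA_add, add_mul, map_add, hu, hv, sInv_add, add_mul]

lemma counit_mul (x y : H ⊗[K] A) :
    intLeg1 (Coalgebra.counit : H →ₗ[K] K) (s13HHA x * s23HHA y) =
      ((1 : H) ⊗ₜ[K] ctr (Coalgebra.counit : H →ₗ[K] K) x) * y := by
  induction x using TensorProduct.induction_on with
  | zero => simp [s13HHA, ctr]
  | tmul h a =>
      induction y using TensorProduct.induction_on with
      | zero => simp [s23HHA]
      | tmul g b =>
          rw [s13HHA_tmul, s23HHA, Algebra.TensorProduct.tmul_mul_tmul,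
            Algebra.TensorProduct.tmul_mul_tmul, ctr_tmul]
          simp only [intLeg1, LinearMap.coe_comp, Function.comp_apply, LinearMap.rTensor_tmul,
            LinearEquiv.coe_coe, TensorProduct.lid_tmul, Algebra.TensorProduct.tmul_mul_tmul,
            mul_one, one_mul, smul_mul_assoc, TensorProduct.tmul_smul]
      | add u v hu hv =>
          rw [s23HHA, tmul_add, ← s23HHA, ← s23HHA, mul_add, map_add, hu, hv, mul_add]
  | add u v hu hv =>
      rw [s13HHA_add, add_mul, map_add, hu, hv, ctr_add, tmul_add, add_mul]

/-- `(∫_H ⊗ id)σ = (∫_H ⊗ id ⊗ id)(σ₂₃^{±1}·σ₁₃)`, both with `σ₂₃` and with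
`σ₂₃⁻¹` inserted (the left-hand side embedded into `H ⊗ A` via the unit of the left
over `H` factor). -/
theorem statement7 (σ : H ⊗[K] A) (hσ : IsUnit σ)
    (hcop1 : idComul (K := K) σ = s13HAA σ * s12HAA σ)
    (hcop2 : comulId (K := K) σ = s13HHA σ * s23HHA σ)
    (intH : H →ₗ[K] K) (hintH : IsLeftCoIntegral intH) :
    (1 : H) ⊗ₜ[K] ((TensorProduct.lid K A) (LinearMap.rTensor A intH σ)) =
        intLeg1 intH (s23HHA σ * s13HHA σ) ∧
      (1 : H) ⊗ₜ[K] ((TensorProduct.lid K A) (LinearMap.rTensor A intH σ)) =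
        intLeg1 intH (s23HHA (sInv σ) * s13HHA σ) := by
  have key : ((1 : H) ⊗ₜ[K] ctr intH σ) = σ * ((1 : H) ⊗ₜ[K] ctr intH σ) := by
    rw [← leg2_mul intH σ σ, ← hcop2, leg2_comulId intH hintH σ]
  have hcounit : ((1 : H) ⊗ₜ[K] ctr (Coalgebra.counit : H →ₗ[K] K) σ) * σ = σ := by
    rw [← counit_mul σ σ, ← hcop2, counit_comulId]
  have hone : ((1 : H) ⊗ₜ[K] ctr (Coalgebra.counit : H →ₗ[K] K) σ) = 1 := by
    obtain ⟨u, hu⟩ := hσ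
    have := congrArg (· * (↑u⁻¹ : H ⊗[K] A)) hcounit
    simpa [← hu, mul_assoc] using this
  have hinv : sInv σ * σ = 1 := by
    rw [← legS_mul σ σ, ← hcop2, legS_comulId, hone]
  have goal1 : ((1 : H) ⊗ₜ[K] ctr intH σ) = intLeg1 intH (s23HHA σ * s13HHA σ) := by
    rw [intLeg1_mul intH σ σ, ← key]
  have goal2 : ((1 : H) ⊗ₜ[K] ctr intH σ) = intLeg1 intH (s23HHA (sInv σ) * s13HHA σ) := by
    rw [intLeg1_mul intH σ (sInv σ)]
    conv_rhs => rw [key]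
    rw [← mul_assoc, hinv, one_mul]
  exact ⟨goal1, goal2⟩

end Stmt7
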